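/- Let ε ≥ 0 and 0 < p < e^{−ε}. If the crediting rollout G̃_p of the counterexample predictor M̃_p is (ε',0)-CCA for some ε' ≥ 0, then ε' ≥ −ln p. -/

import Mathlib

open scoped ENNReal Classical

noncomputable section

namespace CCA

variable {α X D Y : Type*}

/-- Conditional probability of an event `E` given event `B`, for a set function `P`. -/
def prCond (P : Set α → ℝ≥0∞) (B : Set α) : Set α → ℝ≥0∞ := fun E => P (E ∩ B) / P B

/-- `(ε,δ)`-closeness of two set functions, as in differential privacy. -/
def Close (ε δ : ℝ) (P Q : Set α → ℝ≥0∞) : Prop :=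
  ∀ E : Set α,
    P E ≤ ENNReal.ofReal (Real.exp ε) * Q E + ENNReal.ofReal δ ∧
    Q E ≤ ENNReal.ofReal (Real.exp ε) * P E + ENNReal.ofReal δ

/-- `(ε,δ)`-counterfactual credit attribution for a kernel `K` mapping a dataset `S` and a
prompt `x` to a (sub)probability set function over (output, credit set) pairs: for every
prompt, dataset and `s ∈ S`, either `s` is credited with probability `1`, or the conditional
distribution given `s` not credited is `(ε,δ)`-close to the counterfactual on `S \ {s}`. -/
def IsCCA (ε δ : ℝ) (K : Set D → List X → Set (Y × Set D) → ℝ≥0∞) : Prop :=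
  ∀ (S : Set D) (x : List X) (s : D), s ∈ S →
    K S x {q | s ∈ q.2} = 1 ∨
    Close ε δ (prCond (K S x) {q | s ∉ q.2}) (K (S \ {s}) x)

/-- The event kernel associated with a PMF-valued crediting algorithm. -/
def pmfKernel (M : Set D → List X → PMF (Y × Set D)) :
    Set D → List X → Set (Y × Set D) → ℝ≥0∞ :=
  fun S x E => (M S x).toOuterMeasure E

/-- Probability that the crediting rollout of `M` on current prompt `x` produces exactly the
trace `w` of (token, credit set) pairs. -/
def traceProb (M : Set D → List X → PMF (X × Set D)) (S : Set D) :
    List X → List (X × Set D) → ℝ≥0∞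
  | _, [] => 1
  | x, q :: w => M S x q * traceProb M S (x ++ [q.1]) w

/-- A terminal trace: the last generated token is `bot` and no earlier token is `bot`. -/
def IsTerminal (bot : X) (w : List (X × Set D)) : Prop :=
  (w.map Prod.fst).getLast? = some bot ∧ ∀ y ∈ (w.map Prod.fst).dropLast, y ≠ bot

/-- The union of the credit sets appearing along a trace. -/
def creditOf (w : List (X × Set D)) : Set D := w.foldr (fun q acc => q.2 ∪ acc) ∅

/-- Probability that the crediting rollout of `M` on `(S, x0)` outputs the
(generated string, credit set) pair `o`. -/
def rolloutProb (bot : X) (M : Set D → List X → PMF (X × Set D)) (S : Set D)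
    (x0 : List X) (o : List X × Set D) : ℝ≥0∞ :=
  ∑' w : {w : List (X × Set D) //
      IsTerminal bot w ∧ x0 ++ w.map Prod.fst = o.1 ∧ creditOf w = o.2},
    traceProb M S x0 w.1

/-- Event kernel of the crediting rollout of `M`. -/
def rolloutK (bot : X) (M : Set D → List X → PMF (X × Set D)) :
    Set D → List X → Set (List X × Set D) → ℝ≥0∞ :=
  fun S x0 E => ∑' o : E, rolloutProb bot M S x0 ↑o

/-- Coin flip: `true` with probability `min p 1`. -/
def coin (p : ℝ≥0∞) : PMF Bool :=
  PMF.ofFintype (fun b => cond b (min p 1) (1 - min p 1))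
    (by rw [Fintype.sum_bool]; exact add_tsub_cancel_of_le (min_le_right p 1))

/-- Two-point distribution: `x` with probability `p` (clipped at `1`), else `y`. -/
def twoPoint (p : ℝ≥0∞) (x y : α) : PMF α := PMF.map (fun b => if b then x else y) (coin p)

/-- The token alphabet `{a, b, ⊥}` of the counterexample predictor. -/
inductive Tok : Type
  | a : Tok
  | b : Tok
  | bot : Tok
deriving DecidableEq

/-- The counterexample crediting next-token predictor `M̃_p`, over the data universe
`Unit = {s1}` (datasets and credit sets are `Set Unit`, with `{()} = {s1}`). -/
def Mp (p : ℝ) (S : Set Unit) (x : List Tok) : PMF (Tok × Set Unit) :=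
  if x = [] then twoPoint (ENNReal.ofReal p) (Tok.a, (∅ : Set Unit)) (Tok.b, ∅)
  else if x = [Tok.a] then
    if S = ∅ then PMF.pure (Tok.b, ∅)
    else twoPoint (1 / 2) (Tok.a, Set.univ) (Tok.b, ∅)
  else if x = [Tok.b] then
    if S = ∅ then PMF.pure (Tok.a, ∅) else PMF.pure (Tok.a, Set.univ)
  else PMF.pure (Tok.bot, ∅)

lemma twoPoint_apply {α : Type*} (q : ℝ≥0∞) (x y z : α) (hxy : x ≠ y) :
    twoPoint q x y z = if z = x then min q 1 else if z = y then 1 - min q 1 else 0 := by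
  rw [twoPoint, PMF.map_apply, tsum_bool]
  simp only [coin, PMF.ofFintype_apply, Bool.cond_true, Bool.cond_false]
  split_ifs with h1 h2 <;> simp_all

lemma setUnit_cases (C : Set Unit) : C = ∅ ∨ C = Set.univ := by
  by_cases h : () ∈ C
  · right; ext u; cases u; simp [h]
  · left; ext u; cases u; simp [h]

lemma univ_ne_empty : (Set.univ : Set Unit) ≠ ∅ := by
  simp [Set.eq_empty_iff_forall_notMem]

variable {p : ℝ}

lemma Mp_nil (S : Set Unit) (q : Tok × Set Unit) :
    Mp p S [] q = if q = (Tok.a, (∅ : Set Unit)) then min (ENNReal.ofReal p) 1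
      else if q = (Tok.b, ∅) then 1 - min (ENNReal.ofReal p) 1 else 0 := by
  rw [Mp, if_pos rfl]
  rw [twoPoint_apply (ENNReal.ofReal p) (Tok.a, (∅ : Set Unit)) (Tok.b, ∅) q (by simp)]
  split_ifs <;> rfl

lemma Mp_a_univ (q : Tok × Set Unit) :
    Mp p Set.univ [Tok.a] q = if q = (Tok.a, Set.univ) then 1/2
      else if q = (Tok.b, ∅) then 1/2 else 0 := by
  rw [Mp]
  simp only [if_neg (by simp : ([Tok.a] : List Tok) ≠ []), if_pos rfl,
    if_neg univ_ne_empty, ite_true, ite_false]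
  rw [twoPoint_apply (1/2 : ℝ≥0∞) (Tok.a, (Set.univ : Set Unit)) (Tok.b, ∅) q (by simp)]
  have h2 : min (1/2 : ℝ≥0∞) 1 = 1/2 := min_eq_left (by norm_num)
  have h3 : 1 - (1/2 : ℝ≥0∞) = 1/2 := by
    rw [ENNReal.sub_eq_of_eq_add (by norm_num) (ENNReal.add_halves 1).symm]
  rw [h2, h3]
  split_ifs <;> rfl

lemma Mp_b_univ (q : Tok × Set Unit) :
    Mp p Set.univ [Tok.b] q = if q = (Tok.a, Set.univ) then 1 else 0 := by
  rw [Mp]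
  simp only [if_neg (by simp : ([Tok.b] : List Tok) ≠ []),
    if_neg (by simp : ([Tok.b] : List Tok) ≠ [Tok.a]), if_pos rfl,
    if_neg univ_ne_empty, PMF.pure_apply]
  split_ifs with h1 h2 <;> simp_all [eq_comm]

lemma Mp_a_empty (q : Tok × Set Unit) :
    Mp p ∅ [Tok.a] q = if q = (Tok.b, ∅) then 1 else 0 := by
  rw [Mp]
  simp only [if_neg (by simp : ([Tok.a] : List Tok) ≠ []), if_pos rfl, PMF.pure_apply]
  split_ifs with h1 h2 <;> simp_all [eq_comm]

lemma Mp_b_empty (q : Tok × Set Unit) :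
    Mp p ∅ [Tok.b] q = if q = (Tok.a, ∅) then 1 else 0 := by
  rw [Mp]
  simp only [if_neg (by simp : ([Tok.b] : List Tok) ≠ []),
    if_neg (by simp : ([Tok.b] : List Tok) ≠ [Tok.a]), if_pos rfl, if_pos rfl, PMF.pure_apply]
  split_ifs with h1 h2 <;> simp_all [eq_comm]

lemma Mp_long (S : Set Unit) (t1 t2 : Tok) (r : List Tok) (q : Tok × Set Unit) :
    Mp p S (t1 :: t2 :: r) q = if q = (Tok.bot, ∅) then 1 else 0 := by
  rw [Mp]
  simp only [if_neg (by simp : (t1 :: t2 :: r : List Tok) ≠ []),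
    if_neg (by simp : (t1 :: t2 :: r : List Tok) ≠ [Tok.a]),
    if_neg (by simp : (t1 :: t2 :: r : List Tok) ≠ [Tok.b]), PMF.pure_apply]
  split_ifs with h1 h2 <;> simp_all [eq_comm]

lemma rolloutK_eq (bot : X) (M : Set D → List X → PMF (X × Set D)) (S : Set D)
    (x0 : List X) (E : Set (List X × Set D)) :
    rolloutK bot M S x0 E = ∑' w : List (X × Set D),
      if IsTerminal bot w ∧ (x0 ++ w.map Prod.fst, creditOf w) ∈ E
      then traceProb M S x0 w else 0 := by
  have h1 : ∀ o : E, rolloutProb bot M S x0 ↑o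
      = ∑' w : List (X × Set D),
          if IsTerminal bot w ∧ x0 ++ w.map Prod.fst = (↑o : List X × Set D).1 ∧
              creditOf w = (↑o : List X × Set D).2
          then traceProb M S x0 w else 0 := by
    intro o
    have : rolloutProb bot M S x0 ↑o
        = ∑' w : ↥{w : List (X × Set D) | IsTerminal bot w ∧
            x0 ++ w.map Prod.fst = (↑o : List X × Set D).1 ∧
            creditOf w = (↑o : List X × Set D).2}, traceProb M S x0 ↑w := rfl
    rw [this, tsum_subtype]
    apply tsum_congr
    intro w
    rw [Set.indicator_apply]
    congr 1
  rw [rolloutK]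
  simp_rw [h1]
  rw [ENNReal.tsum_comm]
  apply tsum_congr
  intro w
  by_cases hT : IsTerminal bot w
  · by_cases hE : (x0 ++ w.map Prod.fst, creditOf w) ∈ E
    · rw [if_pos ⟨hT, hE⟩]
      refine tsum_eq_single (⟨(x0 ++ w.map Prod.fst, creditOf w), hE⟩ : E) ?_ |>.trans ?_
      · intro o ho
        rw [if_neg]
        rintro ⟨-, h2, h3⟩
        refine ho (Subtype.ext ?_)
        show (↑o : List X × Set D) = (x0 ++ w.map Prod.fst, creditOf w)
        exact Prod.ext_iff.mpr ⟨h2.symm, h3.symm⟩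
      · rw [if_pos ⟨hT, rfl, rfl⟩]
    · rw [if_neg (fun h => hE h.2), ENNReal.tsum_eq_zero]
      intro o
      rw [if_neg]
      rintro ⟨-, h2, h3⟩
      exact hE (by rw [show ((x0 ++ w.map Prod.fst, creditOf w) : List X × Set D) = ↑o
        from Prod.ext_iff.mpr ⟨h2, h3⟩]; exact o.2)
  · rw [if_neg (fun h => hT h.1), ENNReal.tsum_eq_zero]
    intro o
    exact if_neg (fun h => hT h.1)


lemma classify_univ (w : List (Tok × Set Unit)) (hT : IsTerminal Tok.bot w)
    (hnz : traceProb (Mp p) Set.univ [] w ≠ 0) :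
    w = [(Tok.a, ∅), (Tok.a, Set.univ), (Tok.bot, ∅)] ∨
    w = [(Tok.a, ∅), (Tok.b, ∅), (Tok.bot, ∅)] ∨
    w = [(Tok.b, ∅), (Tok.a, Set.univ), (Tok.bot, ∅)] := by
  match w with
  | [] => simp [IsTerminal] at hT
  | [(t1, C1)] =>
    simp only [traceProb, mul_one, ne_eq] at hnz
    rw [Mp_nil] at hnz
    split_ifs at hnz with e1 e2
    · simp only [Prod.mk.injEq] at e1
      obtain ⟨rfl, rfl⟩ := e1
      simp [IsTerminal] at hT
    · simp only [Prod.mk.injEq] at e2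
      obtain ⟨rfl, rfl⟩ := e2
      simp [IsTerminal] at hT
    · exact absurd rfl hnz
  | [(t1, C1), (t2, C2)] =>
    simp only [traceProb, List.nil_append, List.singleton_append, mul_one, ne_eq, mul_eq_zero, not_or] at hnz
    obtain ⟨h1, h2⟩ := hnz
    rw [Mp_nil] at h1
    split_ifs at h1 with e1 e2
    · simp only [Prod.mk.injEq] at e1
      obtain ⟨rfl, rfl⟩ := e1
      rw [Mp_a_univ] at h2
      split_ifs at h2 with f1 f2
      · simp only [Prod.mk.injEq] at f1
        obtain ⟨rfl, rfl⟩ := f1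
        simp [IsTerminal] at hT
      · simp only [Prod.mk.injEq] at f2
        obtain ⟨rfl, rfl⟩ := f2
        simp [IsTerminal] at hT
      · exact absurd rfl h2
    · simp only [Prod.mk.injEq] at e2
      obtain ⟨rfl, rfl⟩ := e2
      rw [Mp_b_univ] at h2
      split_ifs at h2 with f1
      · simp only [Prod.mk.injEq] at f1
        obtain ⟨rfl, rfl⟩ := f1
        simp [IsTerminal] at hT
      · exact absurd rfl h2
    · exact absurd rfl h1
  | [(t1, C1), (t2, C2), (t3, C3)] =>
    simp only [traceProb, List.nil_append, List.singleton_append, mul_one, ne_eq, mul_eq_zero, not_or] at hnz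
    obtain ⟨h1, h2, h3⟩ := hnz
    rw [Mp_nil] at h1
    split_ifs at h1 with e1 e2
    · simp only [Prod.mk.injEq] at e1
      obtain ⟨rfl, rfl⟩ := e1
      rw [Mp_a_univ] at h2
      split_ifs at h2 with f1 f2
      · simp only [Prod.mk.injEq] at f1
        obtain ⟨rfl, rfl⟩ := f1
        rw [Mp_long] at h3
        split_ifs at h3 with g1
        · simp only [Prod.mk.injEq] at g1
          obtain ⟨rfl, rfl⟩ := g1
          left; rfl
        · exact absurd rfl h3
      · simp only [Prod.mk.injEq] at f2
        obtain ⟨rfl, rfl⟩ := f2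
        rw [Mp_long] at h3
        split_ifs at h3 with g1
        · simp only [Prod.mk.injEq] at g1
          obtain ⟨rfl, rfl⟩ := g1
          right; left; rfl
        · exact absurd rfl h3
      · exact absurd rfl h2
    · simp only [Prod.mk.injEq] at e2
      obtain ⟨rfl, rfl⟩ := e2
      rw [Mp_b_univ] at h2
      split_ifs at h2 with f1
      · simp only [Prod.mk.injEq] at f1
        obtain ⟨rfl, rfl⟩ := f1
        rw [Mp_long] at h3
        split_ifs at h3 with g1
        · simp only [Prod.mk.injEq] at g1
          obtain ⟨rfl, rfl⟩ := g1
          right; right; rfl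
        · exact absurd rfl h3
      · exact absurd rfl h2
    · exact absurd rfl h1
  | (t1, C1) :: (t2, C2) :: (t3, C3) :: q4 :: rest =>
    exfalso
    simp only [traceProb, List.nil_append, List.singleton_append, ne_eq, mul_eq_zero, not_or] at hnz
    obtain ⟨-, -, h3, -⟩ := hnz
    rw [Mp_long] at h3
    split_ifs at h3 with g1
    · simp only [Prod.mk.injEq] at g1
      obtain ⟨rfl, rfl⟩ := g1
      exact hT.2 Tok.bot (by simp [List.dropLast]) rfl
    · exact absurd rfl h3

lemma classify_empty (w : List (Tok × Set Unit)) (hT : IsTerminal Tok.bot w)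
    (hnz : traceProb (Mp p) ∅ [] w ≠ 0) :
    w = [(Tok.a, ∅), (Tok.b, ∅), (Tok.bot, ∅)] ∨
    w = [(Tok.b, ∅), (Tok.a, ∅), (Tok.bot, ∅)] := by
  match w with
  | [] => simp [IsTerminal] at hT
  | [(t1, C1)] =>
    simp only [traceProb, mul_one, ne_eq] at hnz
    rw [Mp_nil] at hnz
    split_ifs at hnz with e1 e2
    · simp only [Prod.mk.injEq] at e1
      obtain ⟨rfl, rfl⟩ := e1
      simp [IsTerminal] at hT
    · simp only [Prod.mk.injEq] at e2
      obtain ⟨rfl, rfl⟩ := e2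
      simp [IsTerminal] at hT
    · exact absurd rfl hnz
  | [(t1, C1), (t2, C2)] =>
    simp only [traceProb, List.nil_append, List.singleton_append, mul_one, ne_eq, mul_eq_zero, not_or] at hnz
    obtain ⟨h1, h2⟩ := hnz
    rw [Mp_nil] at h1
    split_ifs at h1 with e1 e2
    · simp only [Prod.mk.injEq] at e1
      obtain ⟨rfl, rfl⟩ := e1
      rw [Mp_a_empty] at h2
      split_ifs at h2 with f1
      · simp only [Prod.mk.injEq] at f1
        obtain ⟨rfl, rfl⟩ := f1
        simp [IsTerminal] at hT
      · exact absurd rfl h2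
    · simp only [Prod.mk.injEq] at e2
      obtain ⟨rfl, rfl⟩ := e2
      rw [Mp_b_empty] at h2
      split_ifs at h2 with f1
      · simp only [Prod.mk.injEq] at f1
        obtain ⟨rfl, rfl⟩ := f1
        simp [IsTerminal] at hT
      · exact absurd rfl h2
    · exact absurd rfl h1
  | [(t1, C1), (t2, C2), (t3, C3)] =>
    simp only [traceProb, List.nil_append, List.singleton_append, mul_one, ne_eq, mul_eq_zero, not_or] at hnz
    obtain ⟨h1, h2, h3⟩ := hnz
    rw [Mp_nil] at h1
    split_ifs at h1 with e1 e2
    · simp only [Prod.mk.injEq] at e1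
      obtain ⟨rfl, rfl⟩ := e1
      rw [Mp_a_empty] at h2
      split_ifs at h2 with f1
      · simp only [Prod.mk.injEq] at f1
        obtain ⟨rfl, rfl⟩ := f1
        rw [Mp_long] at h3
        split_ifs at h3 with g1
        · simp only [Prod.mk.injEq] at g1
          obtain ⟨rfl, rfl⟩ := g1
          left; rfl
        · exact absurd rfl h3
      · exact absurd rfl h2
    · simp only [Prod.mk.injEq] at e2
      obtain ⟨rfl, rfl⟩ := e2
      rw [Mp_b_empty] at h2
      split_ifs at h2 with f1
      · simp only [Prod.mk.injEq] at f1
        obtain ⟨rfl, rfl⟩ := f1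
        rw [Mp_long] at h3
        split_ifs at h3 with g1
        · simp only [Prod.mk.injEq] at g1
          obtain ⟨rfl, rfl⟩ := g1
          right; rfl
        · exact absurd rfl h3
      · exact absurd rfl h2
    · exact absurd rfl h1
  | (t1, C1) :: (t2, C2) :: (t3, C3) :: q4 :: rest =>
    exfalso
    simp only [traceProb, List.nil_append, List.singleton_append, ne_eq, mul_eq_zero, not_or] at hnz
    obtain ⟨-, -, h3, -⟩ := hnz
    rw [Mp_long] at h3
    split_ifs at h3 with g1
    · simp only [Prod.mk.injEq] at g1
      obtain ⟨rfl, rfl⟩ := g1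
      exact hT.2 Tok.bot (by simp [List.dropLast]) rfl
    · exact absurd rfl h3


lemma tsum_eq_three {β : Type*} (f : β → ℝ≥0∞) (w1 w2 w3 : β)
    (h12 : w1 ≠ w2) (h13 : w1 ≠ w3) (h23 : w2 ≠ w3)
    (hv : ∀ w, w ≠ w1 → w ≠ w2 → w ≠ w3 → f w = 0) :
    ∑' w, f w = f w1 + f w2 + f w3 := by
  rw [tsum_eq_sum (s := ({w1, w2, w3} : Finset β))
    (fun b hb => by
      simp only [Finset.mem_insert, Finset.mem_singleton, not_or] at hb
      exact hv b hb.1 hb.2.1 hb.2.2)]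
  rw [Finset.sum_insert (by simp [h12, h13]), Finset.sum_insert (by simp [h23]),
    Finset.sum_singleton, add_assoc]

lemma tsum_eq_two {β : Type*} (f : β → ℝ≥0∞) (w1 w2 : β) (h12 : w1 ≠ w2)
    (hv : ∀ w, w ≠ w1 → w ≠ w2 → f w = 0) :
    ∑' w, f w = f w1 + f w2 := by
  rw [tsum_eq_sum (s := ({w1, w2} : Finset β))
    (fun b hb => by
      simp only [Finset.mem_insert, Finset.mem_singleton, not_or] at hb
      exact hv b hb.1 hb.2)]
  rw [Finset.sum_insert (by simp [h12]), Finset.sum_singleton]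

lemma term_aux : IsTerminal (D := Unit) Tok.bot [(Tok.a, ∅), (Tok.a, Set.univ), (Tok.bot, ∅)] ∧
    IsTerminal (D := Unit) Tok.bot [(Tok.a, ∅), (Tok.b, ∅), (Tok.bot, ∅)] ∧
    IsTerminal (D := Unit) Tok.bot [(Tok.b, ∅), (Tok.a, Set.univ), (Tok.bot, ∅)] ∧
    IsTerminal (D := Unit) Tok.bot [(Tok.b, ∅), (Tok.a, ∅), (Tok.bot, ∅)] := by
  refine ⟨⟨?_, ?_⟩, ⟨?_, ?_⟩, ⟨?_, ?_⟩, ⟨?_, ?_⟩⟩ <;> simp [List.getLast?]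

lemma rolloutK_univ_apply (hp1 : ENNReal.ofReal p ≤ 1) (E : Set (List Tok × Set Unit)) :
    rolloutK Tok.bot (Mp p) Set.univ [] E =
      (if ([Tok.a, Tok.a, Tok.bot], (Set.univ : Set Unit)) ∈ E
        then ENNReal.ofReal p * (1/2) else 0) +
      (if ([Tok.a, Tok.b, Tok.bot], (∅ : Set Unit)) ∈ E
        then ENNReal.ofReal p * (1/2) else 0) +
      (if ([Tok.b, Tok.a, Tok.bot], (Set.univ : Set Unit)) ∈ E
        then 1 - ENNReal.ofReal p else 0) := by
  have hne : (∅ : Set Unit) ≠ Set.univ := fun h => univ_ne_empty h.symm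
  rw [rolloutK_eq, tsum_eq_three _
    [(Tok.a, ∅), (Tok.a, Set.univ), (Tok.bot, ∅)]
    [(Tok.a, ∅), (Tok.b, ∅), (Tok.bot, ∅)]
    [(Tok.b, ∅), (Tok.a, Set.univ), (Tok.bot, ∅)]
    (by simp) (by simp) (by simp)
    (fun w hw1 hw2 hw3 => by
      rw [ite_eq_right_iff]
      rintro ⟨hT, -⟩
      by_contra hnz
      rcases classify_univ w hT hnz with h | h | h
      exacts [hw1 h, hw2 h, hw3 h])]
  have tp1 : traceProb (Mp p) Set.univ []
      [(Tok.a, ∅), (Tok.a, Set.univ), (Tok.bot, ∅)] = ENNReal.ofReal p * (1/2) := by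
    simp only [traceProb, List.nil_append, List.singleton_append, mul_one]
    rw [Mp_nil, Mp_a_univ, Mp_long]
    simp [min_eq_left hp1]
  have tp2 : traceProb (Mp p) Set.univ []
      [(Tok.a, ∅), (Tok.b, ∅), (Tok.bot, ∅)] = ENNReal.ofReal p * (1/2) := by
    simp only [traceProb, List.nil_append, List.singleton_append, mul_one]
    rw [Mp_nil, Mp_a_univ, Mp_long]
    simp [min_eq_left hp1, hne]
  have tp3 : traceProb (Mp p) Set.univ []
      [(Tok.b, ∅), (Tok.a, Set.univ), (Tok.bot, ∅)] = 1 - ENNReal.ofReal p := by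
    simp only [traceProb, List.nil_append, List.singleton_append, mul_one]
    rw [Mp_nil, Mp_b_univ, Mp_long]
    simp [min_eq_left hp1]
  rw [tp1, tp2, tp3]
  simp [creditOf, term_aux.1, term_aux.2.1, term_aux.2.2.1]

lemma rolloutK_empty_apply (hp1 : ENNReal.ofReal p ≤ 1) (E : Set (List Tok × Set Unit)) :
    rolloutK Tok.bot (Mp p) ∅ [] E =
      (if ([Tok.a, Tok.b, Tok.bot], (∅ : Set Unit)) ∈ E then ENNReal.ofReal p else 0) +
      (if ([Tok.b, Tok.a, Tok.bot], (∅ : Set Unit)) ∈ E then 1 - ENNReal.ofReal p else 0) := by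
  rw [rolloutK_eq, tsum_eq_two _
    [(Tok.a, ∅), (Tok.b, ∅), (Tok.bot, ∅)]
    [(Tok.b, ∅), (Tok.a, ∅), (Tok.bot, ∅)]
    (by simp)
    (fun w hw1 hw2 => by
      rw [ite_eq_right_iff]
      rintro ⟨hT, -⟩
      by_contra hnz
      rcases classify_empty w hT hnz with h | h
      exacts [hw1 h, hw2 h])]
  have tp1 : traceProb (Mp p) ∅ []
      [(Tok.a, ∅), (Tok.b, ∅), (Tok.bot, ∅)] = ENNReal.ofReal p := by
    simp only [traceProb, List.nil_append, List.singleton_append, mul_one]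
    rw [Mp_nil, Mp_a_empty, Mp_long]
    simp [min_eq_left hp1]
  have tp2 : traceProb (Mp p) ∅ []
      [(Tok.b, ∅), (Tok.a, ∅), (Tok.bot, ∅)] = 1 - ENNReal.ofReal p := by
    simp only [traceProb, List.nil_append, List.singleton_append, mul_one]
    rw [Mp_nil, Mp_b_empty, Mp_long]
    simp [min_eq_left hp1]
  rw [tp1, tp2]
  simp [creditOf, term_aux.2.1, term_aux.2.2.2]

/-- For `ε ≥ 0` and `0 < p < e^{-ε}`: if the crediting rollout of the counterexample
predictor `M̃_p` is `(ε',0)`-CCA for some `ε' ≥ 0`, then `ε' ≥ -ln p`. -/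
theorem stmt5 (ε ε' p : ℝ) (hε : 0 ≤ ε) (hp0 : 0 < p) (hp : p < Real.exp (-ε))
    (hε' : 0 ≤ ε') (hG : IsCCA ε' 0 (rolloutK Tok.bot (Mp p))) :
    ε' ≥ -Real.log p := by
  have hp1R : p < 1 := lt_of_lt_of_le hp (by rw [Real.exp_le_one_iff]; linarith)
  have hp'0 : ENNReal.ofReal p ≠ 0 := (ENNReal.ofReal_pos.mpr hp0).ne'
  have hp'top : ENNReal.ofReal p ≠ ⊤ := ENNReal.ofReal_ne_top
  have hp'1 : ENNReal.ofReal p ≤ 1 := ENNReal.ofReal_le_one.mpr hp1R.le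
  have hdiff : (Set.univ \ {()} : Set Unit) = ∅ := by
    ext u; cases u; simp
  rcases hG Set.univ [] () (Set.mem_univ ()) with h1 | h2
  · exfalso
    rw [rolloutK_univ_apply hp'1] at h1
    simp only [Set.mem_setOf_eq, Set.mem_univ, Set.mem_empty_iff_false, if_true, if_false,
      ite_true, ite_false] at h1
    have hhalf : ENNReal.ofReal p * (1/2) < ENNReal.ofReal p := by
      rw [mul_one_div]
      exact ENNReal.half_lt_self hp'0 hp'top
    have hlt : ENNReal.ofReal p * (1/2) + 0 + (1 - ENNReal.ofReal p) < 1 := by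
      rw [add_zero]
      calc ENNReal.ofReal p * (1/2) + (1 - ENNReal.ofReal p)
          < ENNReal.ofReal p + (1 - ENNReal.ofReal p) :=
            ENNReal.add_lt_add_right (by simp [ENNReal.sub_ne_top]) hhalf
        _ = 1 := add_tsub_cancel_of_le hp'1
    exact absurd h1 hlt.ne
  · have hclose := (h2 ({([Tok.a, Tok.b, Tok.bot], (∅ : Set Unit))} :
      Set (List Tok × Set Unit))).1
    have hPB : rolloutK Tok.bot (Mp p) Set.univ []
        {q : List Tok × Set Unit | () ∉ q.2} = ENNReal.ofReal p * (1/2) := by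
      rw [rolloutK_univ_apply hp'1]
      simp
    have hPEB : rolloutK Tok.bot (Mp p) Set.univ []
        (({([Tok.a, Tok.b, Tok.bot], (∅ : Set Unit))} : Set (List Tok × Set Unit)) ∩
          {q : List Tok × Set Unit | () ∉ q.2}) = ENNReal.ofReal p * (1/2) := by
      rw [rolloutK_univ_apply hp'1]
      simp
    have hQ : rolloutK Tok.bot (Mp p) (Set.univ \ {()}) []
        ({([Tok.a, Tok.b, Tok.bot], (∅ : Set Unit))} : Set (List Tok × Set Unit))
        = ENNReal.ofReal p := by
      rw [hdiff, rolloutK_empty_apply hp'1]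
      simp
    simp only [prCond] at hclose
    rw [hPEB, hPB, hQ, ENNReal.div_self (by simp [hp'0]) (ENNReal.mul_ne_top hp'top (by norm_num)),
      ENNReal.ofReal_zero, add_zero, ← ENNReal.ofReal_mul (Real.exp_pos ε').le] at hclose
    have h1p : 1 ≤ Real.exp ε' * p := ENNReal.one_le_ofReal.mp hclose
    have hexp : Real.exp (-ε') ≤ p := by
      have he := Real.exp_pos ε'
      rw [Real.exp_neg]
      rw [inv_le_iff_one_le_mul₀ he]
      nlinarith
    have hlog := Real.log_le_log (Real.exp_pos (-ε')) hexp
    rw [Real.log_exp] at hlog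
    linarith


end CCA
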